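/- For every t > 1, the function v_t : ℝ → ℝ defined by v_t(u) = √( (t - 2 - 2u² + √(t² + 16u²)) / 2 ) is unimodal if and only if t ≥ 4. (Here √ denotes the real square root with √s = 0 for s ≤ 0, so v_t(u) = 0 wherever the inner expression is nonpositive.) -/
import Mathlib


open MeasureTheory Real Set Filter Topology

/-- A function `f : ℝ → ℝ` is unimodal if there is a mode `a` such that `f` is
nondecreasing on `(-∞, a]` and nonincreasing on `[a, ∞)`. -/
def Unimodal (f : ℝ → ℝ) : Prop :=
  ∃ a : ℝ, MonotoneOn f (Set.Iic a) ∧ AntitoneOn f (Set.Ici a)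

private lemma key_ineq (t s₁ s₂ : ℝ) (ht : 4 ≤ t) (hs₁ : 0 ≤ s₁) (h : s₁ ≤ s₂) :
    t - 2 - 2 * s₂ + Real.sqrt (t ^ 2 + 16 * s₂) ≤
      t - 2 - 2 * s₁ + Real.sqrt (t ^ 2 + 16 * s₁) := by
  have h1 : (0:ℝ) ≤ t ^ 2 + 16 * s₁ := by nlinarith
  have h2 : (0:ℝ) ≤ t ^ 2 + 16 * s₂ := by nlinarith
  set r₁ := Real.sqrt (t ^ 2 + 16 * s₁) with hr₁
  set r₂ := Real.sqrt (t ^ 2 + 16 * s₂) with hr₂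
  have hr₁sq : r₁ ^ 2 = t ^ 2 + 16 * s₁ := Real.sq_sqrt h1
  have hr₂sq : r₂ ^ 2 = t ^ 2 + 16 * s₂ := Real.sq_sqrt h2
  have hr₁nn : 0 ≤ r₁ := Real.sqrt_nonneg _
  have hr₂nn : 0 ≤ r₂ := Real.sqrt_nonneg _
  have ht' : t ≤ r₁ := by nlinarith
  have hr12 : r₁ ≤ r₂ := Real.sqrt_le_sqrt (by nlinarith)
  nlinarith [mul_nonneg (sub_nonneg.2 hr12) (by linarith : (0:ℝ) ≤ r₁ + r₂ - 8)]

theorem bernoulli_semicircle_density_unimodal_iff (t : ℝ) (ht : 1 < t) :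
    Unimodal (fun u : ℝ =>
      Real.sqrt ((t - 2 - 2 * u ^ 2 + Real.sqrt (t ^ 2 + 16 * u ^ 2)) / 2)) ↔ 4 ≤ t := by
  set v : ℝ → ℝ := fun u : ℝ =>
      Real.sqrt ((t - 2 - 2 * u ^ 2 + Real.sqrt (t ^ 2 + 16 * u ^ 2)) / 2) with hv
  constructor
  · rintro ⟨a, hmono, hanti⟩
    by_contra ht4
    push_neg at ht4
    set u := Real.sqrt (16 - t ^ 2) / 4 with hu
    have hunn : 0 ≤ u := by positivity
    have hu2 : u ^ 2 = (16 - t ^ 2) / 16 := by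
      rw [hu, div_pow, Real.sq_sqrt (by nlinarith)]; norm_num
    have hvu : v u = Real.sqrt ((t + t ^ 2 / 8) / 2) := by
      have h16 : t ^ 2 + 16 * u ^ 2 = 16 := by rw [hu2]; ring
      have hs16 : Real.sqrt (16 : ℝ) = 4 := by
        rw [show (16:ℝ) = 4 ^ 2 by norm_num, Real.sqrt_sq (by norm_num)]
      simp only [hv]
      rw [h16, hs16, hu2]
      congr 1; ring
    have hv0 : v 0 = Real.sqrt (t - 1) := by
      simp only [hv]
      rw [show t ^ 2 + 16 * (0:ℝ) ^ 2 = t ^ 2 by ring,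
        Real.sqrt_sq (by linarith)]
      congr 1; ring
    have hlt : v 0 < v u := by
      rw [hv0, hvu]
      exact Real.sqrt_lt_sqrt (by linarith) (by nlinarith)
    have hvneg : v (-u) = v u := by
      have hns : (-u) ^ 2 = u ^ 2 := by ring
      simp only [hv, hns]
    rcases le_total a 0 with ha | ha
    · have := hanti (mem_Ici.2 ha) (mem_Ici.2 (ha.trans hunn)) hunn
      exact absurd this (not_le.2 hlt)
    · have := hmono (mem_Iic.2 (by linarith : -u ≤ a)) (mem_Iic.2 ha)
        (by linarith : -u ≤ (0:ℝ))
      rw [hvneg] at this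
      exact absurd this (not_le.2 hlt)
  · intro ht4
    refine ⟨0, ?_, ?_⟩
    · intro x hx y hy hxy
      apply Real.sqrt_le_sqrt
      have hx0 : x ≤ 0 := mem_Iic.1 hx
      have hy0 : y ≤ 0 := mem_Iic.1 hy
      have := key_ineq t (y ^ 2) (x ^ 2) ht4 (sq_nonneg y) (by nlinarith)
      linarith
    · intro x hx y hy hxy
      apply Real.sqrt_le_sqrt
      have hx0 : (0:ℝ) ≤ x := mem_Ici.1 hx
      have := key_ineq t (x ^ 2) (y ^ 2) ht4 (sq_nonneg x) (by nlinarith)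
      linarith
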